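/- Let λ > 0, ζ > 0, and k > max{1, 8ζ/λ² − 1}. Define α̃ = (k+1)²λ / [(k+1)²λ² + 2k²ζ]. Then h(α̃) = [4kζ + 2(k+1)²ζ] / [(k+1)²λ² + 2k²ζ] < 1, where h(α) = ((k+1)²/k²)(1−αλ)² + (2/k)(1−αλ) + 2α²ζ. -/
import Mathlib


theorem h_at_alphaTilde_lt_one (lam ζ k : ℝ) (hlam : 0 < lam) (hζ : 0 < ζ)
    (hk : 1 < k) (hk2 : 8 * ζ / lam ^ 2 - 1 < k) :
    (((k + 1) ^ 2 / k ^ 2) *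
        (1 - ((k + 1) ^ 2 * lam / ((k + 1) ^ 2 * lam ^ 2 + 2 * k ^ 2 * ζ)) * lam) ^ 2 +
      (2 / k) * (1 - ((k + 1) ^ 2 * lam / ((k + 1) ^ 2 * lam ^ 2 + 2 * k ^ 2 * ζ)) * lam) +
      2 * ((k + 1) ^ 2 * lam / ((k + 1) ^ 2 * lam ^ 2 + 2 * k ^ 2 * ζ)) ^ 2 * ζ) =
        (4 * k * ζ + 2 * (k + 1) ^ 2 * ζ) / ((k + 1) ^ 2 * lam ^ 2 + 2 * k ^ 2 * ζ) ∧
    (4 * k * ζ + 2 * (k + 1) ^ 2 * ζ) / ((k + 1) ^ 2 * lam ^ 2 + 2 * k ^ 2 * ζ) < 1 := by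
  have hD : 0 < (k + 1) ^ 2 * lam ^ 2 + 2 * k ^ 2 * ζ := by positivity
  have hk0 : (0:ℝ) < k := by linarith
  have hlam2 : (0:ℝ) < lam ^ 2 := by positivity
  have hkey : 8 * ζ < (k + 1) * lam ^ 2 := by
    have := (div_lt_iff₀ hlam2).mp (by linarith : 8 * ζ / lam ^ 2 < k + 1)
    linarith
  constructor
  · field_simp
    ring
  · rw [div_lt_one hD]
    nlinarith [mul_pos hζ hk0, sq_nonneg (k - 1)]
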